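/- Let Z be a complete metric space, let γ_k : S¹ → Z be continuous injective curves converging uniformly to an injective curve γ : S¹ → Z. Then for every ε > 0 there exists δ > 0 such that for every k ∈ ℕ and all points x, y ∈ Γ_k = γ_k(S¹) with d(x,y) < δ, one of the two arcs of Γ_k between x and y lies in the ball B(x, ε). -/

import Mathlib

open Metric Set Filter Topology

lemma per_inj_eq {Z : Type*} [MetricSpace Z] (c : ℝ → Z)
    (hper : Function.Periodic c 1) (hinj : Set.InjOn c (Set.Ico 0 1))
    {a b : ℝ} (hab : a ≤ b) (hba : b ≤ a + 1) (h : c a = c b) :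
    b = a ∨ b = a + 1 := by
  set m : ℤ := ⌊a⌋ with hm
  have hfl : (m:ℝ) ≤ a := Int.floor_le a
  have hfu : a < m + 1 := Int.lt_floor_add_one a
  have hca : c (a - m) = c a := by
    have := hper.sub_int_mul_eq (x := a) m; simpa using this
  have hcb : c (b - m) = c b := by
    have := hper.sub_int_mul_eq (x := b) m; simpa using this
  have ha' : a - m ∈ Set.Ico (0:ℝ) 1 := ⟨by linarith, by linarith⟩
  by_cases hb1 : b - m < 1
  · have hb' : b - m ∈ Set.Ico (0:ℝ) 1 := ⟨by linarith, hb1⟩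
    have := hinj ha' hb' (by rw [hca, hcb, h])
    left; linarith
  · push_neg at hb1
    have hcb1 : c (b - m - 1) = c b := by
      have := hper.sub_int_mul_eq (x := b) (m + 1)
      push_cast at this
      rw [← this]; ring_nf
    have hb' : b - m - 1 ∈ Set.Ico (0:ℝ) 1 := ⟨by linarith, by linarith⟩
    have := hinj ha' hb' (by rw [hca, hcb1, h])
    right; linarith

lemma arc_lemma {Z : Type*} [MetricSpace Z] (c : ℝ → Z)
    (hper : Function.Periodic c 1) (hcont : Continuous c)
    (hinj : Set.InjOn c (Set.Ico 0 1)) {ε : ℝ} (hε : 0 < ε) :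
    ∃ δ > 0, ∀ s t : ℝ, s ≤ t → t ≤ s + 1 → dist (c s) (c t) < δ →
      c '' Set.Icc s t ⊆ Metric.ball (c s) ε ∨
      c '' Set.Icc t (s + 1) ⊆ Metric.ball (c s) ε := by
  by_contra hcon
  push_neg at hcon
  have H : ∀ n : ℕ, ∃ s t u v : ℝ, s ∈ Set.Ico (0:ℝ) 1 ∧ s ≤ t ∧ t ≤ s + 1 ∧
      dist (c s) (c t) < 1 / (n + 1) ∧ u ∈ Set.Icc s t ∧ ε ≤ dist (c u) (c s) ∧
      v ∈ Set.Icc t (s + 1) ∧ ε ≤ dist (c v) (c s) := by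
    intro n
    obtain ⟨s, t, hst, hts, hd, hn1, hn2⟩ := hcon (1 / (n + 1)) (by positivity)
    obtain ⟨x, hx, hxb⟩ := Set.not_subset.mp hn1
    obtain ⟨u, hu, rfl⟩ := hx
    obtain ⟨y, hy, hyb⟩ := Set.not_subset.mp hn2
    obtain ⟨v, hv, rfl⟩ := hy
    have hεu : ε ≤ dist (c u) (c s) := le_of_not_gt (fun hlt => hxb (mem_ball.mpr hlt))
    have hεv : ε ≤ dist (c v) (c s) := le_of_not_gt (fun hlt => hyb (mem_ball.mpr hlt))
    set m : ℤ := ⌊s⌋ with hm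
    have hfl : (m:ℝ) ≤ s := Int.floor_le s
    have hfu : s < m + 1 := Int.lt_floor_add_one s
    have hsh : ∀ x : ℝ, c (x - m) = c x := fun x => by
      have := hper.sub_int_mul_eq (x := x) m; simpa using this
    refine ⟨s - m, t - m, u - m, v - m, ⟨by linarith, by linarith⟩, by linarith, by linarith,
      by rw [hsh, hsh]; exact hd, ⟨by linarith [hu.1], by linarith [hu.2]⟩,
      by rw [hsh, hsh]; exact hεu, ⟨by linarith [hv.1], by linarith [hv.2]⟩,
      by rw [hsh, hsh]; exact hεv⟩
  choose s t u v hs hst hts hd hu hεu hv hεv using H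
  have hK : IsCompact ((Set.Icc (0:ℝ) 1) ×ˢ ((Set.Icc (0:ℝ) 2) ×ˢ ((Set.Icc (0:ℝ) 2) ×ˢ (Set.Icc (0:ℝ) 2)))) :=
    (isCompact_Icc.prod (isCompact_Icc.prod (isCompact_Icc.prod isCompact_Icc)))
  have hmem : ∀ n, (s n, (t n, (u n, v n))) ∈
      ((Set.Icc (0:ℝ) 1) ×ˢ ((Set.Icc (0:ℝ) 2) ×ˢ ((Set.Icc (0:ℝ) 2) ×ˢ (Set.Icc (0:ℝ) 2)))) := by
    intro n
    have h1 := hs n; have h2 := hst n; have h3 := hts n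
    have h4 := hu n; have h5 := hv n
    refine ⟨⟨h1.1, h1.2.le⟩, ⟨⟨by linarith [h1.1], by linarith [h1.2]⟩,
      ⟨by linarith [h4.1, h1.1], by linarith [h4.2, h1.2]⟩,
      ⟨by linarith [h5.1, h1.1], by linarith [h5.2, h1.2]⟩⟩⟩
  obtain ⟨⟨s₀, t₀, u₀, v₀⟩, -, φ, hφ, hconv⟩ := hK.tendsto_subseq hmem
  have hS : Tendsto (fun n => s (φ n)) atTop (𝓝 s₀) := by
    have := (continuous_fst.tendsto _).comp hconv
    exact this
  have hT : Tendsto (fun n => t (φ n)) atTop (𝓝 t₀) := by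
    have := ((continuous_fst.comp continuous_snd).tendsto _).comp hconv
    exact this
  have hU : Tendsto (fun n => u (φ n)) atTop (𝓝 u₀) := by
    have := ((continuous_fst.comp (continuous_snd.comp continuous_snd)).tendsto _).comp hconv
    exact this
  have hV : Tendsto (fun n => v (φ n)) atTop (𝓝 v₀) := by
    have := ((continuous_snd.comp (continuous_snd.comp continuous_snd)).tendsto _).comp hconv
    exact this
  have hzero : Tendsto (fun n : ℕ => 1 / ((φ n : ℝ) + 1)) atTop (𝓝 0) :=
    tendsto_one_div_add_atTop_nhds_zero_nat.comp hφ.tendsto_atTop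
  have hceq : c s₀ = c t₀ := by
    have hdist : Tendsto (fun n => dist (c (s (φ n))) (c (t (φ n)))) atTop
        (𝓝 (dist (c s₀) (c t₀))) :=
      ((hcont.tendsto _).comp hS).dist ((hcont.tendsto _).comp hT)
    have hle : dist (c s₀) (c t₀) ≤ 0 :=
      le_of_tendsto_of_tendsto' hdist hzero (fun n => (hd (φ n)).le)
    exact dist_le_zero.mp hle
  have hst₀ : s₀ ≤ t₀ := le_of_tendsto_of_tendsto' hS hT (fun n => hst (φ n))
  have hts₀ : t₀ ≤ s₀ + 1 :=
    le_of_tendsto_of_tendsto' hT (hS.add tendsto_const_nhds) (fun n => hts (φ n))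
  have hu₀ : u₀ ∈ Set.Icc s₀ t₀ :=
    ⟨le_of_tendsto_of_tendsto' hS hU (fun n => (hu (φ n)).1),
     le_of_tendsto_of_tendsto' hU hT (fun n => (hu (φ n)).2)⟩
  have hv₀ : v₀ ∈ Set.Icc t₀ (s₀ + 1) :=
    ⟨le_of_tendsto_of_tendsto' hT hV (fun n => (hv (φ n)).1),
     le_of_tendsto_of_tendsto' hV (hS.add tendsto_const_nhds) (fun n => (hv (φ n)).2)⟩
  have hεu₀ : ε ≤ dist (c u₀) (c s₀) :=
    le_of_tendsto_of_tendsto' tendsto_const_nhds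
      (((hcont.tendsto _).comp hU).dist ((hcont.tendsto _).comp hS))
      (fun n => hεu (φ n))
  have hεv₀ : ε ≤ dist (c v₀) (c s₀) :=
    le_of_tendsto_of_tendsto' tendsto_const_nhds
      (((hcont.tendsto _).comp hV).dist ((hcont.tendsto _).comp hS))
      (fun n => hεv (φ n))
  rcases per_inj_eq c hper hinj hst₀ hts₀ hceq with h | h
  · have : u₀ = s₀ := le_antisymm (h ▸ hu₀.2) hu₀.1
    rw [this, dist_self] at hεu₀; linarith
  · have : v₀ = s₀ + 1 := le_antisymm hv₀.2 (h ▸ hv₀.1)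
    have hcv : c v₀ = c s₀ := by rw [this]; exact hper s₀
    rw [hcv, dist_self] at hεv₀; linarith


/-- Let `γ_k : S¹ → Z` be continuous injective curves (modelled as continuous
`1`-periodic maps `ℝ → Z`, injective on `[0,1)`) converging uniformly to an injective curve `γ`.
Then for every `ε > 0` there is `δ > 0` such that for all `k` and all parameters `s ≤ t ≤ s + 1`,
if `dist (γ_k s) (γ_k t) < δ` then one of the two arcs of `Γ_k = γ_k(S¹)` between `γ_k s` and
`γ_k t` (namely `γ_k([s,t])` or `γ_k([t, s+1])`) lies in the ball `B(γ_k s, ε)`. -/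
theorem stmt_12 {Z : Type*} [MetricSpace Z] [CompleteSpace Z]
    (γ : ℕ → ℝ → Z) (γlim : ℝ → Z)
    (hper : ∀ k, Function.Periodic (γ k) 1) (hperlim : Function.Periodic γlim 1)
    (hcont : ∀ k, Continuous (γ k)) (hcontlim : Continuous γlim)
    (hinj : ∀ k, Set.InjOn (γ k) (Set.Ico 0 1)) (hinjlim : Set.InjOn γlim (Set.Ico 0 1))
    (hunif : TendstoUniformly γ γlim atTop) :
    ∀ ε > 0, ∃ δ > 0, ∀ k : ℕ, ∀ s t : ℝ, s ≤ t → t ≤ s + 1 →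
      dist (γ k s) (γ k t) < δ →
        γ k '' Set.Icc s t ⊆ Metric.ball (γ k s) ε ∨
        γ k '' Set.Icc t (s + 1) ⊆ Metric.ball (γ k s) ε := by
  intro ε hε
  obtain ⟨δ₀, hδ₀, hlim⟩ := arc_lemma γlim hperlim hcontlim hinjlim (ε := ε/4) (by linarith)
  have hsmall : (0:ℝ) < min (δ₀/4) (ε/4) := by positivity
  obtain ⟨N, hN⟩ := Filter.eventually_atTop.mp
    ((Metric.tendstoUniformly_iff.mp hunif) _ hsmall)
  have hAk : ∀ k, ∃ δ > 0, ∀ s t : ℝ, s ≤ t → t ≤ s + 1 → dist (γ k s) (γ k t) < δ →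
      γ k '' Set.Icc s t ⊆ Metric.ball (γ k s) ε ∨
      γ k '' Set.Icc t (s + 1) ⊆ Metric.ball (γ k s) ε :=
    fun k => arc_lemma (γ k) (hper k) (hcont k) (hinj k) hε
  choose d hd hdp using hAk
  refine ⟨min (δ₀/2) ((Finset.range (N+1)).inf' ⟨0, by simp⟩ d), ?_, ?_⟩
  · refine lt_min (by linarith) ?_
    refine (Finset.lt_inf'_iff _).2 ?_
    intro i _; exact hd i
  · intro k s t hst hts hdist
    by_cases hk : k < N + 1
    · refine hdp k s t hst hts (lt_of_lt_of_le hdist ?_)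
      exact le_trans (min_le_right _ _) (Finset.inf'_le d (Finset.mem_range.mpr hk))
    · push_neg at hk
      have hkN : N ≤ k := by omega
      have hclose := hN k hkN
      have hdistlim : dist (γlim s) (γlim t) < δ₀ := by
        have h1 := hclose s; have h2 := hclose t
        have h3 : dist (γ k s) (γ k t) < δ₀/2 := lt_of_lt_of_le hdist (min_le_left _ _)
        have h4 : min (δ₀/4) (ε/4) ≤ δ₀/4 := min_le_left _ _
        calc dist (γlim s) (γlim t)
            ≤ dist (γlim s) (γ k s) + dist (γ k s) (γ k t) + dist (γ k t) (γlim t) :=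
              dist_triangle4 _ _ _ _
          _ < δ₀/4 + δ₀/2 + δ₀/4 := by
              rw [dist_comm (γ k t) (γlim t)]; exact add_lt_add (add_lt_add (h1.trans_le h4) h3) (h2.trans_le h4)
          _ = δ₀ := by ring
      have key : ∀ x : ℝ, γlim x ∈ Metric.ball (γlim s) (ε/4) →
          γ k x ∈ Metric.ball (γ k s) ε := by
        intro x hx
        rw [mem_ball] at hx ⊢
        have h1 := hclose x; have h2 := hclose s
        have h4 : min (δ₀/4) (ε/4) ≤ ε/4 := min_le_right _ _
        calc dist (γ k x) (γ k s)
            ≤ dist (γ k x) (γlim x) + dist (γlim x) (γlim s) + dist (γlim s) (γ k s) :=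
              dist_triangle4 _ _ _ _
          _ < ε/4 + ε/4 + ε/4 := by
              rw [dist_comm (γ k x) (γlim x)]
              exact add_lt_add (add_lt_add (h1.trans_le h4) hx) (h2.trans_le h4)
          _ < ε := by linarith
      rcases hlim s t hst hts hdistlim with h | h
      · left; rintro _ ⟨x, hx, rfl⟩
        exact key x (h ⟨x, hx, rfl⟩)
      · right; rintro _ ⟨x, hx, rfl⟩
        exact key x (h ⟨x, hx, rfl⟩)
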